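/- arXiv:1911.08165 — 4 statements merged into one kernel-verified Lean document; each statement's English description precedes it below -/
import Mathlib

section
/- For the max-min problem max_{q≥0, Σq_j ≤ P_mu} min_j a_j*q_j with all a_j > 0, the optimal value is P_mu / (Σ_j 1/a_j), it is attained with Σ q_j = P_mu, and at any optimal point all the values a_j*q_j are equal. -/
open Finset

/-- Max-min allocation `max_{q ≥ 0, ∑ q ≤ Pmu} min_j a_j q_j` with all `a_j > 0`:
the optimal value is `Pmu / ∑ 1/a_j`, it is attained with `∑ q = Pmu`, and at any
optimal point all values `a_j q_j` are equal. -/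
theorem stmt1 {ι : Type*} [Fintype ι] [Nonempty ι]
    (a : ι → ℝ) (Pmu : ℝ) (ha : ∀ j, 0 < a j) (hPmu : 0 < Pmu) :
    IsGreatest
      {v : ℝ | ∃ q : ι → ℝ, (∀ j, 0 ≤ q j) ∧ (∑ j, q j ≤ Pmu) ∧
        v = Finset.univ.inf' Finset.univ_nonempty (fun j => a j * q j)}
      (Pmu / ∑ j, (a j)⁻¹) ∧
    (∃ q : ι → ℝ, (∀ j, 0 ≤ q j) ∧ (∑ j, q j = Pmu) ∧
      Finset.univ.inf' Finset.univ_nonempty (fun j => a j * q j) = Pmu / ∑ j, (a j)⁻¹) ∧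
    (∀ q : ι → ℝ, (∀ j, 0 ≤ q j) → (∑ j, q j ≤ Pmu) →
      Finset.univ.inf' Finset.univ_nonempty (fun j => a j * q j) = Pmu / ∑ j, (a j)⁻¹ →
      (∑ j, q j = Pmu) ∧ ∀ i j, a i * q i = a j * q j) := by
  set S : ℝ := ∑ j, (a j)⁻¹ with hSdef
  have hS : 0 < S := Finset.sum_pos (fun j _ => inv_pos.2 (ha j)) Finset.univ_nonempty
  set c : ℝ := Pmu / S with hcdef
  have hc : 0 < c := div_pos hPmu hS
  -- optimal point
  set q₀ : ι → ℝ := fun j => c * (a j)⁻¹ with hq₀def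
  have hq₀nn : ∀ j, 0 ≤ q₀ j := fun j => le_of_lt (mul_pos hc (inv_pos.2 (ha j)))
  have hval : ∀ j, a j * q₀ j = c := by
    intro j
    rw [hq₀def]
    show a j * (c * (a j)⁻¹) = c
    rw [mul_comm c, ← mul_assoc, mul_inv_cancel₀ (ha j).ne', one_mul]
  have hsum₀ : ∑ j, q₀ j = Pmu := by
    simp only [hq₀def, ← Finset.mul_sum, ← hSdef]
    field_simp [hcdef]
    rw [hcdef]; exact div_mul_cancel₀ Pmu hS.ne'
  have hinf₀ : Finset.univ.inf' Finset.univ_nonempty (fun j => a j * q₀ j) = c := by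
    apply le_antisymm
    · obtain ⟨j⟩ := (inferInstance : Nonempty ι)
      exact (Finset.inf'_le _ (Finset.mem_univ j)).trans_eq (hval j)
    · exact Finset.le_inf' _ _ fun j _ => (hval j).ge
  -- upper bound
  have hub : ∀ q : ι → ℝ, (∀ j, 0 ≤ q j) → (∑ j, q j ≤ Pmu) →
      Finset.univ.inf' Finset.univ_nonempty (fun j => a j * q j) ≤ c := by
    intro q hqnn hqsum
    set v := Finset.univ.inf' Finset.univ_nonempty (fun j => a j * q j) with hv
    have hle : ∀ j, v * (a j)⁻¹ ≤ q j := by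
      intro j
      have h1 : v ≤ a j * q j := Finset.inf'_le _ (Finset.mem_univ j)
      rw [mul_inv_le_iff₀ (ha j), mul_comm]
      exact h1
    have : v * S ≤ Pmu := by
      calc v * S = ∑ j, v * (a j)⁻¹ := by rw [hSdef, Finset.mul_sum]
        _ ≤ ∑ j, q j := Finset.sum_le_sum fun j _ => hle j
        _ ≤ Pmu := hqsum
    rw [hcdef, le_div_iff₀ hS]
    exact this
  refine ⟨⟨⟨q₀, hq₀nn, hsum₀.le, hinf₀.symm⟩, ?_⟩, ⟨q₀, hq₀nn, hsum₀, hinf₀⟩, ?_⟩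
  · rintro v ⟨q, hqnn, hqsum, rfl⟩
    exact hub q hqnn hqsum
  · intro q hqnn hqsum hinf
    have hle : ∀ j, c * (a j)⁻¹ ≤ q j := by
      intro j
      have h1 : c ≤ a j * q j := hinf ▸ Finset.inf'_le _ (Finset.mem_univ j)
      rw [mul_inv_le_iff₀ (ha j), mul_comm]
      exact h1
    have hsumge : Pmu ≤ ∑ j, q j := by
      calc Pmu = ∑ j, c * (a j)⁻¹ := by
            rw [← Finset.mul_sum, ← hSdef, hcdef]; field_simp
        _ ≤ ∑ j, q j := Finset.sum_le_sum fun j _ => hle j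
    have hsumeq : ∑ j, q j = Pmu := le_antisymm hqsum hsumge
    have hzero : ∀ j ∈ Finset.univ, q j - c * (a j)⁻¹ = 0 := by
      rw [← Finset.sum_eq_zero_iff_of_nonneg (fun j _ => sub_nonneg.2 (hle j))]
      rw [Finset.sum_sub_distrib, hsumeq, ← Finset.mul_sum, ← hSdef, hcdef]
      field_simp
      ring
    have hq : ∀ j, q j = c * (a j)⁻¹ := fun j => sub_eq_zero.1 (hzero j (Finset.mem_univ j))
    refine ⟨hsumeq, fun i j => ?_⟩
    rw [hq i, hq j, mul_comm c, ← mul_assoc, mul_inv_cancel₀ (ha i).ne', one_mul,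
      mul_comm c, ← mul_assoc, mul_inv_cancel₀ (ha j).ne', one_mul]
end

section
/- Let f, g: [0,P] → ℝ be continuous with f strictly increasing, g strictly increasing, f(0)=g(0)=0. Let S = {(u,v) : ∃ s,t ≥ 0, s+t ≤ P, 0 ≤ u ≤ f(s), 0 ≤ v ≤ g(t)}. Then the set of strong Pareto optimal points of S (points (u,v) ∈ S such that no (u',v') ∈ S satisfies u' ≥ u, v' ≥ v with at least one strict inequality) is exactly {(f(s), g(P - s)) : s ∈ [0, P]}. -/
/-- Strong Pareto boundary characterization: with `f, g` continuous and strictly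
increasing on `[0,P]`, `f 0 = g 0 = 0`, and
`S = {(u,v) : ∃ s t ≥ 0, s+t ≤ P, 0 ≤ u ≤ f s, 0 ≤ v ≤ g t}`, the strong Pareto
optimal points of `S` are exactly `{(f s, g (P-s)) : s ∈ [0,P]}`. -/
theorem stmt8 (P : ℝ) (hP : 0 < P) (f g : ℝ → ℝ)
    (hfc : ContinuousOn f (Set.Icc 0 P)) (hgc : ContinuousOn g (Set.Icc 0 P))
    (hfm : StrictMonoOn f (Set.Icc 0 P)) (hgm : StrictMonoOn g (Set.Icc 0 P))
    (hf0 : f 0 = 0) (hg0 : g 0 = 0)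
    (S : Set (ℝ × ℝ))
    (hS : S = {uv : ℝ × ℝ | ∃ s t : ℝ, 0 ≤ s ∧ 0 ≤ t ∧ s + t ≤ P ∧
      0 ≤ uv.1 ∧ uv.1 ≤ f s ∧ 0 ≤ uv.2 ∧ uv.2 ≤ g t}) :
    {uv : ℝ × ℝ | uv ∈ S ∧ ¬∃ uv' ∈ S,
        uv.1 ≤ uv'.1 ∧ uv.2 ≤ uv'.2 ∧ (uv.1 < uv'.1 ∨ uv.2 < uv'.2)}
      = (fun s => (f s, g (P - s))) '' Set.Icc 0 P := by
  subst hS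
  ext ⟨u, v⟩
  simp only [Set.mem_setOf_eq, Set.mem_image, Set.mem_Icc, Prod.mk.injEq, not_exists]
  constructor
  · rintro ⟨⟨s, t, hs0, ht0, hst, hu0, hus, hv0, hvt⟩, hpar⟩
    have hsP : s ≤ P := by linarith
    have htP : t ≤ P := by linarith
    obtain ⟨s₀, hs₀I, hfs₀⟩ :=
      intermediate_value_Icc hs0 (hfc.mono (Set.Icc_subset_Icc le_rfl hsP))
        (Set.mem_Icc.mpr ⟨by rw [hf0]; exact hu0, hus⟩)
    obtain ⟨t₀, ht₀I, hgt₀⟩ :=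
      intermediate_value_Icc ht0 (hgc.mono (Set.Icc_subset_Icc le_rfl htP))
        (Set.mem_Icc.mpr ⟨by rw [hg0]; exact hv0, hvt⟩)
    have hs₀P : s₀ ∈ Set.Icc (0:ℝ) P := ⟨hs₀I.1, hs₀I.2.trans hsP⟩
    have ht₀P : t₀ ∈ Set.Icc (0:ℝ) P := ⟨ht₀I.1, ht₀I.2.trans htP⟩
    have hsum : s₀ + t₀ = P := by
      by_contra h
      have hlt : s₀ + t₀ < P :=
        lt_of_le_of_ne (by linarith [hs₀I.2, ht₀I.2]) h
      have hs'I : P - t₀ ∈ Set.Icc (0:ℝ) P := ⟨by linarith [ht₀P.2], by linarith [ht₀P.1]⟩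
      have hlt' : f s₀ < f (P - t₀) := hfm hs₀P hs'I (by linarith)
      exact hpar (f (P - t₀), v)
        ⟨⟨P - t₀, t₀, hs'I.1, ht₀P.1, by linarith, by dsimp; linarith,
          le_rfl, hv0, hgt₀.ge⟩, by dsimp; linarith, le_rfl, Or.inl (by dsimp; linarith)⟩
    exact ⟨s₀, ⟨hs₀P.1, hs₀P.2⟩, hfs₀, by rw [show P - s₀ = t₀ by linarith]; exact hgt₀⟩
  · rintro ⟨s, ⟨hs0, hsP⟩, hfs, hgs⟩
    have hsI : s ∈ Set.Icc (0:ℝ) P := ⟨hs0, hsP⟩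
    have htI : P - s ∈ Set.Icc (0:ℝ) P := ⟨by linarith, by linarith⟩
    have hf0' : 0 ≤ f s := by
      rw [← hf0]; exact (hfm.le_iff_le ⟨le_rfl, hP.le⟩ hsI).mpr hs0
    have hg0' : 0 ≤ g (P - s) := by
      rw [← hg0]; exact (hgm.le_iff_le ⟨le_rfl, hP.le⟩ htI).mpr htI.1
    refine ⟨⟨s, P - s, hs0, htI.1, by linarith, by linarith, hfs.ge,
      by linarith, hgs.ge⟩, ?_⟩
    rintro ⟨u', v'⟩ ⟨⟨s', t', hs'0, ht'0, hst', hu'0, hu's, hv'0, hv't⟩, hu, hv, hstrict⟩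
    dsimp at hu's hv't hu hv hstrict
    have hs'P : s' ∈ Set.Icc (0:ℝ) P := ⟨hs'0, by linarith⟩
    have ht'P : t' ∈ Set.Icc (0:ℝ) P := ⟨ht'0, by linarith⟩
    have h1 : s ≤ s' := (hfm.le_iff_le hsI hs'P).mp (by linarith)
    have h2 : P - s ≤ t' := (hgm.le_iff_le htI ht'P).mp (by linarith)
    rcases hstrict with h | h
    · have : s < s' := (hfm.lt_iff_lt hsI hs'P).mp (by linarith)
      linarith
    · have : P - s < t' := (hgm.lt_iff_lt htI ht'P).mp (by linarith)
      linarith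
end

section
/- Under the hypotheses of the previous statement (f, g continuous and strictly increasing on [0,P] with f(0)=g(0)=0, S defined as above), S has no weak Pareto optimal points that are not strong Pareto optimal: every point (u,v) ∈ S such that no (u',v') ∈ S has u' > u and v' > v is already a strong Pareto optimal point. -/
lemma stmt9_aux (P : ℝ) (f : ℝ → ℝ) (hfc : ContinuousOn f (Set.Icc 0 P))
    (s u : ℝ) (hs0 : 0 < s) (hsP : s ≤ P) (hu : u < f s) :
    ∃ x, 0 ≤ x ∧ x < s ∧ u < f x := by
  have hs : s ∈ Set.Icc 0 P := ⟨le_of_lt hs0, hsP⟩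
  have h := (hfc s hs).eventually (eventually_gt_nhds hu)
  rw [Filter.Eventually, Metric.mem_nhdsWithin_iff] at h
  obtain ⟨δ, hδ, hball⟩ := h
  set x := s - min δ s / 2 with hx
  have hmin : 0 < min δ s := lt_min hδ hs0
  have hx0 : 0 ≤ x := by
    have h' := min_le_right δ s
    rw [hx]; linarith
  have hxs : x < s := by rw [hx]; linarith
  refine ⟨x, hx0, hxs, ?_⟩
  apply hball
  constructor
  · rw [Metric.mem_ball, Real.dist_eq, abs_of_nonpos (by simp [hx]; linarith)]
    have := min_le_left δ s
    simp [hx]; linarith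
  · exact ⟨hx0, le_trans hxs.le hsP⟩

/-- No merely-weak Pareto optimal points: under the same hypotheses as the Pareto
boundary characterization, every weak Pareto optimal point of `S` is a strong
Pareto optimal point. -/
theorem stmt9 (P : ℝ) (hP : 0 < P) (f g : ℝ → ℝ)
    (hfc : ContinuousOn f (Set.Icc 0 P)) (hgc : ContinuousOn g (Set.Icc 0 P))
    (hfm : StrictMonoOn f (Set.Icc 0 P)) (hgm : StrictMonoOn g (Set.Icc 0 P))
    (hf0 : f 0 = 0) (hg0 : g 0 = 0)
    (S : Set (ℝ × ℝ))
    (hS : S = {uv : ℝ × ℝ | ∃ s t : ℝ, 0 ≤ s ∧ 0 ≤ t ∧ s + t ≤ P ∧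
      0 ≤ uv.1 ∧ uv.1 ≤ f s ∧ 0 ≤ uv.2 ∧ uv.2 ≤ g t}) :
    ∀ uv ∈ S, (¬∃ uv' ∈ S, uv.1 < uv'.1 ∧ uv.2 < uv'.2) →
      ¬∃ uv' ∈ S, uv.1 ≤ uv'.1 ∧ uv.2 ≤ uv'.2 ∧ (uv.1 < uv'.1 ∨ uv.2 < uv'.2) := by
  subst hS
  rintro ⟨u, v⟩ ⟨s0, t0, hs00, ht00, hst0, hu0, huf0, hv0, hvg0⟩ hweak
  rintro ⟨⟨u', v'⟩, ⟨s, t, hs0n, ht0n, hst, hu'0, hu'f, hv'0, hv'g⟩, hle1, hle2, hstrict⟩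
  simp only at hle1 hle2 hstrict hu'f hv'g hu'0 hv'0
  apply hweak
  have hsP : s ≤ P := by linarith
  have htP : t ≤ P := by linarith
  -- key facts
  have huf : u ≤ f s := le_trans hle1 hu'f
  have hvg : v ≤ g t := le_trans hle2 hv'g
  by_cases h1 : u < f s
  · by_cases h2 : v < g t
    · exact ⟨(f s, g t), ⟨s, t, hs0n, ht0n, hst, by linarith, le_refl _, by linarith, le_refl _⟩,
        h1, h2⟩
    · -- v = g t, u < f s : shrink s, grow t
      have hveq : v = g t := le_antisymm hvg (not_lt.mp h2)
      have hspos : 0 < s := by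
        by_contra h
        have hs0' : s = 0 := le_antisymm (not_lt.mp h) hs0n
        rw [hs0', hf0] at h1; linarith
      obtain ⟨x, hx0, hxs, hux⟩ := stmt9_aux P f hfc s u hspos hsP h1
      set t' := t + (s - x) with ht'
      have ht'P : t' ≤ P := by simp [ht']; linarith
      have htt' : t < t' := by simp [ht']; linarith
      have hgt : g t < g t' := hgm ⟨ht0n, htP⟩ ⟨by linarith, ht'P⟩ htt'
      exact ⟨(f x, g t'), ⟨x, t', hx0, by linarith, by simp [ht']; linarith,
        by linarith, le_refl _, by linarith, le_refl _⟩, hux, by rw [hveq]; exact hgt⟩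
  · -- u = f s
    have hueq : u = f s := le_antisymm huf (not_lt.mp h1)
    have hu'eq : u' = u := le_antisymm (hueq ▸ hu'f) hle1
    have hvv' : v < v' := by
      rcases hstrict with h | h
      · rw [hu'eq] at h; linarith
      · exact h
    have h2 : v < g t := lt_of_lt_of_le hvv' hv'g
    have htpos : 0 < t := by
      by_contra h
      have ht0' : t = 0 := le_antisymm (not_lt.mp h) ht0n
      rw [ht0', hg0] at h2; linarith
    obtain ⟨y, hy0, hyt, hvy⟩ := stmt9_aux P g hgc t v htpos htP h2
    set s' := s + (t - y) with hs'
    have hs'P : s' ≤ P := by simp [hs']; linarith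
    have hss' : s < s' := by simp [hs']; linarith
    have hfs : f s < f s' := hfm ⟨hs0n, hsP⟩ ⟨by linarith, hs'P⟩ hss'
    exact ⟨(f s', g y), ⟨s', y, by linarith, hy0, by simp [hs']; linarith,
      by linarith, le_refl _, by linarith, le_refl _⟩, by rw [hueq]; exact hfs, hvy⟩
end

section
/- With f(s) = (1-(U+G)/T) log₂(1 + N s / C) for constants N, C > 0, 0 < U+G < T, and g the optimal value function of the weighted water-filling problem with budget P - s, the map s ↦ (f(s), g(P-s)) for s ∈ [0,P] traces a curve such that f(s) is strictly increasing and g(P-s) is strictly decreasing in s; in particular, no two distinct points on this curve dominate each other componentwise. -/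
open Finset

/-- The parametrized Pareto curve `s ↦ (f s, g (P-s))` with `f` the closed-form
multicast objective and `g` the optimal unicast value function: `f` is strictly
increasing, `s ↦ g (P-s)` is strictly decreasing on `[0,P]`, and no two distinct
points on the curve dominate each other componentwise. -/
theorem stmt14 {U : ℕ} (hU : 1 ≤ U) (N C T UG P : ℝ) (α c : Fin U → ℝ)
    (hN : 0 < N) (hC : 0 < C) (hUG : 0 < UG) (hT : UG < T) (hP : 0 < P)
    (hα : ∀ m, 0 < α m) (hc : ∀ m, 0 < c m)
    (f g : ℝ → ℝ)
    (hf : ∀ s, f s = (1 - UG / T) * Real.logb 2 (1 + N * s / C))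
    (hg : ∀ t ∈ Set.Icc (0 : ℝ) P,
      IsGreatest {v : ℝ | ∃ p : Fin U → ℝ, (∀ m, 0 ≤ p m) ∧ (∑ m, p m = t) ∧
        v = ∑ m, α m * Real.log (1 + c m * p m)} (g t)) :
    StrictMonoOn f (Set.Icc 0 P) ∧
    StrictAntiOn (fun s => g (P - s)) (Set.Icc 0 P) ∧
    (∀ s ∈ Set.Icc (0 : ℝ) P, ∀ t ∈ Set.Icc (0 : ℝ) P, s ≠ t →
      ¬(f s ≤ f t ∧ g (P - s) ≤ g (P - t))) := by
  have hTpos : 0 < T := hUG.trans hT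
  have hk : 0 < 1 - UG / T := by
    have : UG / T < 1 := (div_lt_one hTpos).mpr hT
    linarith
  -- f strictly mono
  have hfmono : StrictMonoOn f (Set.Icc 0 P) := by
    intro a ha b hb hab
    rw [hf a, hf b]
    have h1 : 0 < 1 + N * a / C := by
      have : 0 ≤ N * a / C := div_nonneg (mul_nonneg hN.le ha.1) hC.le
      linarith
    have h2 : N * a / C < N * b / C := by gcongr
    exact mul_lt_mul_of_pos_left
      (Real.logb_lt_logb one_lt_two h1 (by linarith)) hk
  -- g strictly mono on [0,P]
  have hgmono : ∀ t₁ ∈ Set.Icc (0:ℝ) P, ∀ t₂ ∈ Set.Icc (0:ℝ) P, t₁ < t₂ →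
      g t₁ < g t₂ := by
    intro t₁ ht₁ t₂ ht₂ ht
    obtain ⟨⟨p, hp0, hps, hpv⟩, _⟩ := hg t₁ ht₁
    have hU0 : (0 : ℕ) < U := hU
    set i : Fin U := ⟨0, hU0⟩
    set q : Fin U → ℝ := fun m => p m + if m = i then t₂ - t₁ else 0 with hq
    have hq0 : ∀ m, 0 ≤ q m := by
      intro m
      have := hp0 m
      by_cases h : m = i
      · subst h; simp [hq]; linarith
      · simpa [hq, h] using this
    have hqs : ∑ m, q m = t₂ := by
      simp only [hq]
      rw [Finset.sum_add_distrib, hps, Finset.sum_ite_eq' Finset.univ i]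
      simp
    have hle : (∑ m, α m * Real.log (1 + c m * q m)) ≤ g t₂ :=
      (hg t₂ ht₂).2 ⟨q, hq0, hqs, rfl⟩
    have hlt : g t₁ < ∑ m, α m * Real.log (1 + c m * q m) := by
      rw [hpv]
      apply Finset.sum_lt_sum
      · intro m _
        apply mul_le_mul_of_nonneg_left _ (hα m).le
        apply Real.log_le_log (by nlinarith [hp0 m, (hc m).le])
        have : p m ≤ q m := by
          by_cases h : m = i
          · subst h; simp [hq]; linarith
          · simp [hq, h]
        nlinarith [(hc m).le]
      · refine ⟨i, Finset.mem_univ i, ?_⟩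
        apply mul_lt_mul_of_pos_left _ (hα i)
        apply Real.log_lt_log (by nlinarith [hp0 i, (hc i).le])
        have : p i < q i := by simp [hq]; linarith
        nlinarith [hc i]
    linarith
  have hganti : StrictAntiOn (fun s => g (P - s)) (Set.Icc 0 P) := by
    intro a ha b hb hab
    exact hgmono (P - b) ⟨by linarith [hb.2], by linarith [hb.1]⟩
      (P - a) ⟨by linarith [ha.2], by linarith [ha.1]⟩ (by linarith)
  refine ⟨hfmono, hganti, ?_⟩
  intro s hs t ht hst ⟨h1, h2⟩
  rcases lt_or_gt_of_ne hst with h | h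
  · exact absurd h2 (not_le.mpr (hganti hs ht h))
  · exact absurd h1 (not_le.mpr (hfmono ht hs h))
end
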